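/- Let X be a normed lattice, Y a Banach lattice, both satisfying ‖z‖ = max(‖z⁺‖, ‖z⁻‖) for all their elements, and let T : X → Y be a surjective linear operator with ‖(T x)⁺‖ = ‖x⁺‖ for all x ∈ X. Then T is a lattice isometry: T is an isometric linear bijection and both T and T⁻¹ are positive, hence T preserves the lattice operations (T(x ⊔ y) = T x ⊔ T y for all x, y). -/

import Mathlib

theorem stmt4 {X Y : Type*}
    [NormedAddCommGroup X] [Lattice X] [IsOrderedAddMonoid X] [HasSolidNorm X] [NormedSpace ℝ X]
    [NormedAddCommGroup Y] [Lattice Y] [IsOrderedAddMonoid Y] [HasSolidNorm Y] [NormedSpace ℝ Y] [CompleteSpace Y]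
    (hX : ∀ x : X, ‖x‖ = max ‖x ⊔ 0‖ ‖(-x) ⊔ 0‖)
    (hY : ∀ y : Y, ‖y‖ = max ‖y ⊔ 0‖ ‖(-y) ⊔ 0‖)
    (T : X →ₗ[ℝ] Y) (hsurj : Function.Surjective T)
    (hT : ∀ x : X, ‖T x ⊔ 0‖ = ‖x ⊔ 0‖) :
    Function.Bijective T ∧ (∀ x : X, ‖T x‖ = ‖x‖) ∧
      (∀ x : X, 0 ≤ x → 0 ≤ T x) ∧ (∀ x : X, 0 ≤ T x → 0 ≤ x) ∧
      (∀ x y : X, T (x ⊔ y) = T x ⊔ T y) := by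
  have hTneg : ∀ x : X, ‖(-(T x)) ⊔ 0‖ = ‖(-x) ⊔ 0‖ := by
    intro x
    have := hT (-x)
    rwa [map_neg] at this
  have hiso : ∀ x : X, ‖T x‖ = ‖x‖ := by
    intro x
    rw [hY (T x), hX x, hT x, hTneg x]
  have key : ∀ x : X, 0 ≤ T x ↔ 0 ≤ x := by
    intro x
    constructor
    · intro h
      have h1 : (-(T x)) ⊔ 0 = 0 := sup_eq_right.mpr (neg_nonpos.mpr h)
      have h2 : ‖(-x) ⊔ 0‖ = 0 := by rw [← hTneg x, h1, norm_zero]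
      have h3 : (-x) ⊔ 0 = 0 := norm_eq_zero.mp h2
      have : -x ≤ 0 := sup_eq_right.mp h3
      exact neg_nonpos.mp this
    · intro h
      have h1 : (-x) ⊔ 0 = 0 := sup_eq_right.mpr (neg_nonpos.mpr h)
      have h2 : ‖(-(T x)) ⊔ 0‖ = 0 := by rw [hTneg x, h1, norm_zero]
      have h3 : (-(T x)) ⊔ 0 = 0 := norm_eq_zero.mp h2
      have : -(T x) ≤ 0 := sup_eq_right.mp h3
      exact neg_nonpos.mp this
  have hinj : Function.Injective T := by
    intro a b hab
    have : ‖a - b‖ = 0 := by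
      rw [← hiso, map_sub, hab, sub_self, norm_zero]
    have := norm_eq_zero.mp this
    exact sub_eq_zero.mp this
  have hmono : ∀ a b : X, a ≤ b → T a ≤ T b := by
    intro a b hab
    have : 0 ≤ T (b - a) := (key _).mpr (by simpa using sub_nonneg.mpr hab)
    rw [map_sub] at this
    exact sub_nonneg.mp this
  have hsup : ∀ x y : X, T (x ⊔ y) = T x ⊔ T y := by
    intro x y
    apply le_antisymm
    · obtain ⟨z, hz⟩ := hsurj (T x ⊔ T y)
      have hx : x ≤ z := by
        have : 0 ≤ T (z - x) := by
          rw [map_sub, hz]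
          simpa using sub_nonneg.mpr (le_sup_left : T x ≤ T x ⊔ T y)
        have := (key _).mp this
        exact sub_nonneg.mp this
      have hy : y ≤ z := by
        have : 0 ≤ T (z - y) := by
          rw [map_sub, hz]
          simpa using sub_nonneg.mpr (le_sup_right : T y ≤ T x ⊔ T y)
        have := (key _).mp this
        exact sub_nonneg.mp this
      rw [← hz]
      exact hmono _ _ (sup_le hx hy)
    · exact sup_le (hmono _ _ le_sup_left) (hmono _ _ le_sup_right)
  exact ⟨⟨hinj, hsurj⟩, hiso, fun x h => (key x).mpr h, fun x h => (key x).mp h, hsup⟩
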